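/- Let A be a separable Banach function algebra on a compact Hausdorff space X, and set E = {x ∈ X : the closure of J_x in A is not equal to M_x}. If the lattice Id(A) of closed ideals of A is countably-generated, then E is a meagre subset of X. -/
import Mathlib


open Topology

/-- Let `B` be a separable Banach function algebra on a compact Hausdorff space `X`.
If the lattice of closed ideals of `B` is countably generated, then the exceptional set
`E = {x : closure J_x ≠ M_x}` is a meagre subset of `X`. -/
theorem stmt_14 {X : Type*} [TopologicalSpace X] [CompactSpace X] [T2Space X]
    {B : Type*} [NormedCommRing B] [NormedAlgebra ℂ B] [CompleteSpace B]
    [TopologicalSpace.SeparableSpace B]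
    (ι : B →ₐ[ℂ] C(X, ℂ)) (hι : Function.Injective ι)
    (hsep : ∀ x y : X, x ≠ y → ∃ f : B, ι f x ≠ ι f y)
    (hcg : ∃ S : Set (Ideal B), S.Countable ∧ (∀ J ∈ S, IsClosed (J : Set B)) ∧
      ∀ I : Ideal B, IsClosed (I : Set B) →
        (I : Set B) = closure (⋃ J ∈ {J ∈ S | (J : Set B) ⊆ (I : Set B)}, (J : Set B)))
    (E : Set X)
    (hE : E = {x : X | closure {f : B | ∃ U ∈ 𝓝 x, ∀ z ∈ U, ι f z = 0}
        ≠ {f : B | ι f x = 0}}) :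
    IsMeagre E := by
  obtain ⟨S, hSc, hScl, hSgen⟩ := hcg
  -- evaluation characters (automatically continuous on a Banach algebra)
  set ev : X → (B →ₐ[ℂ] ℂ) := fun x => (ContinuousMap.evalAlgHom ℂ ℂ x).comp ι with hev
  have hevc : ∀ x, Continuous (ev x) := fun x => map_continuous (ev x)
  -- hulls of ideals
  set h : Ideal B → Set X := fun J => {x | ∀ f ∈ J, ι f x = 0} with hh
  have hhcl : ∀ J, IsClosed (h J) := by
    intro J
    have : h J = ⋂ f ∈ J, (ι f) ⁻¹' {0} := by
      ext x; simp [hh, Set.mem_iInter]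
    rw [this]
    exact isClosed_biInter fun f _ => isClosed_singleton.preimage (ι f).continuous
  rw [isMeagre_iff_countable_union_isNowhereDense]
  refine ⟨(fun J => frontier (h J)) '' S, ?_, hSc.image _, ?_⟩
  · rintro t ⟨J, -, rfl⟩
    rw [IsNowhereDense, isClosed_frontier.closure_eq]
    exact interior_frontier (hhcl J)
  · intro x hxE
    rw [Set.mem_sUnion]
    by_contra hcon
    push_neg at hcon
    -- so x is not in the frontier of any hull
    have hfr : ∀ J ∈ S, x ∉ frontier (h J) := by
      intro J hJ hx
      exact hcon _ ⟨J, hJ, rfl⟩ hx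
    -- the maximal ideal at x
    have hMxcl : IsClosed {f : B | ι f x = 0} := by
      have : {f : B | ι f x = 0} = (ev x) ⁻¹' {0} := by ext f; simp [hev]
      rw [this]
      exact isClosed_singleton.preimage (hevc x)
    set Mx : Ideal B := RingHom.ker (ev x).toRingHom with hMx
    have hMxset : (Mx : Set B) = {f : B | ι f x = 0} := by
      ext f; simp [hMx, RingHom.mem_ker, hev]
    have hMxcl' : IsClosed (Mx : Set B) := hMxset ▸ hMxcl
    have hgen := hSgen Mx hMxcl'
    -- derive the contradiction: closure J_x = M_x
    rw [hE] at hxE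
    apply hxE
    apply Set.Subset.antisymm
    · refine closure_minimal ?_ hMxcl
      rintro f ⟨U, hU, hvan⟩
      exact hvan x (mem_of_mem_nhds hU)
    · rw [← hMxset, hgen]
      refine closure_minimal ?_ isClosed_closure
      refine Set.iUnion₂_subset ?_
      rintro J ⟨hJS, hJM⟩ f hfJ
      apply subset_closure
      -- x lies in the interior of the hull of J
      have hxh : x ∈ h J := by
        intro g hg
        have : g ∈ {f : B | ι f x = 0} := hMxset ▸ hJM hg
        exact this
      have hxint : x ∈ interior (h J) := by
        by_contra hxint
        exact hfr J hJS ⟨subset_closure hxh, hxint⟩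
      exact ⟨interior (h J), isOpen_interior.mem_nhds hxint,
        fun z hz => interior_subset hz f hfJ⟩
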